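/- In the LLG domain with locals winning, both locals weak, and counting the auctioneer as a fourth player, the Shapley payment with auctioneer of bidder 1 is p₁ = (7A)/12 − B/4 + G/4. -/

import Mathlib

/-- Shapley payoff (with auctioneer) of bidder `i` in a 3-bidder coalitional game:
the auctioneer is counted as a fourth player implicitly present in every coalition. -/
noncomputable def shapleyAuc (V : Finset (Fin 3) → ℝ) (i : Fin 3) : ℝ :=
  ∑ S ∈ (Finset.univ.erase i).powerset,
    (((S.card + 1).factorial * (3 - S.card - 1).factorial : ℕ) : ℝ)
      / ((Nat.factorial 4 : ℕ) : ℝ) * (V (insert i S) - V S)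

/-- In LLG with locals winning and both locals weak, the Shapley payment
with auctioneer of bidder 1 is p₁ = A − π₁ = 7A/12 − B/4 + G/4. -/
theorem stmt4 (A B G : ℝ) (hA : 0 ≤ A) (hB : 0 ≤ B) (hG : 0 ≤ G)
    (hAG : A < G) (hBG : B < G) (hwin : A + B ≥ G)
    (V : Finset (Fin 3) → ℝ)
    (h0 : V ∅ = 0) (h1 : V {0} = A) (h2 : V {1} = B) (h3 : V {2} = G)
    (h12 : V {0, 1} = A + B) (h13 : V {0, 2} = G) (h23 : V {1, 2} = G)
    (h123 : V {0, 1, 2} = A + B) :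
    A - shapleyAuc V 0 = 7 * A / 12 - B / 4 + G / 4 := by
  have huniv : (Finset.univ.erase (0 : Fin 3)) = {1, 2} := by decide
  rw [shapleyAuc, huniv]
  rw [show ({1, 2} : Finset (Fin 3)).powerset = {∅, {1}, {2}, {1, 2}} from by decide]
  rw [Finset.sum_insert (by decide), Finset.sum_insert (by decide),
    Finset.sum_insert (by decide), Finset.sum_singleton]
  norm_num [h0, h1, h2, h3, h12, h13, h23, h123,
    show insert (0:Fin 3) ({1}: Finset (Fin 3)) = {0,1} from by decide,
    show insert (0:Fin 3) ({2}: Finset (Fin 3)) = {0,2} from by decide,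
    show insert (0:Fin 3) ({1,2}: Finset (Fin 3)) = {0,1,2} from by decide,
    show ({1,2} : Finset (Fin 3)).card = 2 from by decide,
    Nat.factorial]
  ring
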